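/- Fix κ > 0, 0 < p < 1, β ∈ (0,1], λ ≥ 1, weights w_1 = w(p), w_2 = w(1-p) > 0, and d_l < Q < d_h. Define F(π) = λ(κ - π)^β w_1 / (π^β w_2) · (1 + κ(d_h - Q)/((κ - π)(Q - d_l)))^{β-1} for π ∈ (0, κ). Then F is strictly decreasing in π, lim_{π→0⁺} F(π) = +∞ and lim_{π→κ⁻} F(π) = 0; hence the equation F(π) = 1 has a unique solution π̄_s^{PTh} ∈ (0, κ). -/

import Mathlib

open Filter Topology

/-- The seller's PT high-reference-point threshold price exists and is unique:
F is strictly decreasing on (0, κ) with F → ∞ at 0⁺ and F → 0 at κ⁻, so F = 1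
has a unique solution in (0, κ). -/
theorem seller_threshold_high_unique (β lam κ Q dl dh w1 w2 p : ℝ)
    (hβ0 : 0 < β) (hβ1 : β ≤ 1) (hlam : 1 ≤ lam) (hκ : 0 < κ)
    (hp0 : 0 < p) (hp1 : p < 1)
    (hdl : dl < Q) (hdh : Q < dh) (hw1 : 0 < w1) (hw2 : 0 < w2)
    (F : ℝ → ℝ)
    (hF : ∀ π : ℝ, F π =
      lam * (κ - π) ^ β * w1 / (π ^ β * w2) *
        (1 + κ * (dh - Q) / ((κ - π) * (Q - dl))) ^ (β - 1)) :
    StrictAntiOn F (Set.Ioo 0 κ) ∧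
      Filter.Tendsto F (nhdsWithin 0 (Set.Ioi 0)) Filter.atTop ∧
      Filter.Tendsto F (nhdsWithin κ (Set.Iio κ)) (nhds 0) ∧
      ∃! π : ℝ, π ∈ Set.Ioo (0:ℝ) κ ∧ F π = 1 := by
  set A : ℝ := κ * (dh - Q) / (Q - dl) with hA_def
  have hQdl : 0 < Q - dl := by linarith
  have hA : 0 < A := div_pos (mul_pos hκ (by linarith)) hQdl
  set C : ℝ := lam * w1 / w2 with hC_def
  have hC : 0 < C := div_pos (mul_pos (by linarith) hw1) hw2
  -- splitting an rpow
  have hsplit : ∀ t : ℝ, 0 < t → t ^ β = t * t ^ (β - 1) := by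
    intro t ht
    nth_rewrite 1 [show β = 1 + (β - 1) by ring]
    rw [Real.rpow_add ht, Real.rpow_one]
  -- the key algebraic simplification
  have hkey : ∀ π ∈ Set.Ioo (0:ℝ) κ,
      F π = C * (π ^ (-β) * ((κ - π) / (κ - π + A) * (κ - π + A) ^ β)) := by
    rintro π ⟨h0, hπκ⟩
    have hkp : 0 < κ - π := by linarith
    have hkpA : 0 < κ - π + A := by linarith
    have h1 : 1 + κ * (dh - Q) / ((κ - π) * (Q - dl)) = (κ - π + A) / (κ - π) := by
      rw [hA_def]; field_simp
    rw [hF, h1, Real.div_rpow hkpA.le hkp.le, Real.rpow_neg h0.le,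
      hsplit _ hkp, hsplit _ hkpA]
    have hb : (κ - π) ^ (β - 1) ≠ 0 := (Real.rpow_pos_of_pos hkp _).ne'
    have hb2 : (κ - π + A) ^ (β - 1) ≠ 0 := (Real.rpow_pos_of_pos hkpA _).ne'
    have hπβ : (π:ℝ) ^ β ≠ 0 := (Real.rpow_pos_of_pos h0 _).ne'
    rw [hC_def]
    field_simp
  have hpos : ∀ π ∈ Set.Ioo (0:ℝ) κ, 0 < F π := by
    rintro π ⟨h0, hπκ⟩
    rw [hkey π ⟨h0, hπκ⟩]
    have hkp : 0 < κ - π := by linarith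
    have hkpA : 0 < κ - π + A := by linarith
    positivity
  -- strict antitonicity
  have hanti : StrictAntiOn F (Set.Ioo 0 κ) := by
    rintro x ⟨hx0, hxκ⟩ y ⟨hy0, hyκ⟩ hxy
    rw [hkey x ⟨hx0, hxκ⟩, hkey y ⟨hy0, hyκ⟩]
    have hky : 0 < κ - y := by linarith
    have hkx : 0 < κ - x := by linarith
    have hkyA : 0 < κ - y + A := by linarith
    have hkxA : 0 < κ - x + A := by linarith
    have h1 : y ^ (-β) < x ^ (-β) :=
      Real.rpow_lt_rpow_of_neg hx0 hxy (by linarith)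
    have h2 : (κ - y) / (κ - y + A) < (κ - x) / (κ - x + A) := by
      rw [div_lt_div_iff₀ hkyA hkxA]
      nlinarith
    have h3 : (κ - y + A) ^ β < (κ - x + A) ^ β :=
      Real.rpow_lt_rpow hkyA.le (by linarith) hβ0
    have h4 : (κ - y) / (κ - y + A) * (κ - y + A) ^ β
        < (κ - x) / (κ - x + A) * (κ - x + A) ^ β :=
      mul_lt_mul'' h2 h3 (div_pos hky hkyA).le (Real.rpow_pos_of_pos hkyA _).le
    have h5 : y ^ (-β) * ((κ - y) / (κ - y + A) * (κ - y + A) ^ β)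
        < x ^ (-β) * ((κ - x) / (κ - x + A) * (κ - x + A) ^ β) :=
      mul_lt_mul'' h1 h4 (Real.rpow_pos_of_pos hy0 _).le
        (mul_pos (div_pos hky hkyA) (Real.rpow_pos_of_pos hkyA _)).le
    exact mul_lt_mul_of_pos_left h5 hC
  -- the "nice" part is continuous on (0, κ) (in fact wherever π > 0 and π < κ + A)
  have hG : ∀ π : ℝ, 0 < π → 0 < κ - π + A →
      ContinuousAt (fun π : ℝ => C * (π ^ (-β) *
        ((κ - π) / (κ - π + A) * (κ - π + A) ^ β))) π := by
    intro π h0 hkpA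
    apply ContinuousAt.mul continuousAt_const
    apply ContinuousAt.mul
    · exact Real.continuousAt_rpow_const _ _ (Or.inl h0.ne')
    · apply ContinuousAt.mul
      · exact ContinuousAt.div (by fun_prop) (by fun_prop) hkpA.ne'
      · exact ContinuousAt.rpow_const (by fun_prop) (Or.inl hkpA.ne')
  -- limit at 0⁺
  have hT0 : Filter.Tendsto F (nhdsWithin 0 (Set.Ioi 0)) Filter.atTop := by
    have hmem : Set.Ioo (0:ℝ) κ ∈ nhdsWithin (0:ℝ) (Set.Ioi 0) :=
      Ioo_mem_nhdsGT_of_mem ⟨le_refl 0, hκ⟩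
    have heq : F =ᶠ[nhdsWithin (0:ℝ) (Set.Ioi 0)]
        fun π => C * ((κ - π) / (κ - π + A) * (κ - π + A) ^ β) * π ^ (-β) := by
      filter_upwards [hmem] with π hπ
      rw [hkey π hπ]; ring
    rw [Filter.tendsto_congr' heq]
    apply Filter.Tendsto.pos_mul_atTop
      (show (0:ℝ) < C * (κ / (κ + A) * (κ + A) ^ β) by positivity)
    · have hcont : ContinuousAt (fun π : ℝ => C * ((κ - π) / (κ - π + A) * (κ - π + A) ^ β)) 0 := by
        apply ContinuousAt.mul continuousAt_const
        apply ContinuousAt.mul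
        · exact ContinuousAt.div (by fun_prop) (by fun_prop) (by simp; linarith)
        · refine ContinuousAt.rpow_const (by fun_prop) (Or.inl ?_)
          show κ - 0 + A ≠ 0
          have : (0:ℝ) < κ - 0 + A := by linarith
          exact this.ne'
      have := hcont.tendsto.mono_left (nhdsWithin_le_nhds (s := Set.Ioi (0:ℝ)))
      simpa using this
    · -- π^(-β) → ∞ as π → 0⁺
      have h1 : Filter.Tendsto (fun π : ℝ => π ^ β) (nhdsWithin 0 (Set.Ioi 0))
          (nhdsWithin 0 (Set.Ioi 0)) := by
        rw [tendsto_nhdsWithin_iff]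
        constructor
        · have : ContinuousAt (fun π : ℝ => π ^ β) 0 :=
            Real.continuousAt_rpow_const _ _ (Or.inr hβ0.le)
          have := this.tendsto.mono_left (nhdsWithin_le_nhds (s := Set.Ioi (0:ℝ)))
          simpa [Real.zero_rpow hβ0.ne'] using this
        · filter_upwards [self_mem_nhdsWithin] with π hπ
          exact Real.rpow_pos_of_pos hπ β
      have h2 : Filter.Tendsto (fun π : ℝ => (π ^ β)⁻¹) (nhdsWithin 0 (Set.Ioi 0)) Filter.atTop :=
        tendsto_inv_nhdsGT_zero.comp h1
      refine h2.congr' ?_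
      filter_upwards [self_mem_nhdsWithin] with π hπ
      simp [Real.rpow_neg (le_of_lt hπ)]
  have hTκ : Filter.Tendsto F (nhdsWithin κ (Set.Iio κ)) (nhds 0) := by
    have hmemκ : Set.Ioo (0:ℝ) κ ∈ nhdsWithin κ (Set.Iio κ) :=
      Ioo_mem_nhdsLT_of_mem ⟨hκ, le_refl κ⟩
    have heq : F =ᶠ[nhdsWithin κ (Set.Iio κ)]
        fun π => C * (π ^ (-β) * ((κ - π) / (κ - π + A) * (κ - π + A) ^ β)) := by
      filter_upwards [hmemκ] with π hπ
      exact hkey π hπ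
    rw [Filter.tendsto_congr' heq]
    have hκA : 0 < κ - κ + A := by simpa using hA
    have hcont := (hG κ hκ hκA).tendsto.mono_left (nhdsWithin_le_nhds (s := Set.Iio κ))
    simpa using hcont
  refine ⟨hanti, hT0, hTκ, ?_⟩
  -- existence via IVT
  have hmem0 : ∀ᶠ π in nhdsWithin (0:ℝ) (Set.Ioi 0), π ∈ Set.Ioo (0:ℝ) κ :=
    Ioo_mem_nhdsGT_of_mem ⟨le_refl 0, hκ⟩
  have hmemκ : ∀ᶠ π in nhdsWithin κ (Set.Iio κ), π ∈ Set.Ioo (0:ℝ) κ :=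
    Ioo_mem_nhdsLT_of_mem ⟨hκ, le_refl κ⟩
  obtain ⟨a, haF, ha⟩ := ((hT0.eventually_ge_atTop 2).and hmem0).exists
  obtain ⟨b, hbF, hb⟩ :=
    ((hTκ.eventually_lt_const (by norm_num : (0:ℝ) < 1)).and hmemκ).exists
  have hab : a < b := by
    by_contra h
    push_neg at h
    rcases eq_or_lt_of_le h with h' | h'
    · subst h'; linarith
    · have := hanti hb ha h'
      linarith
  have hcontOn : ContinuousOn F (Set.Icc a b) := by
    intro x hx
    have hx0 : 0 < x := lt_of_lt_of_le ha.1 hx.1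
    have hxκ : x < κ := lt_of_le_of_lt hx.2 hb.2
    have hxA : 0 < κ - x + A := by linarith
    have hCA : ContinuousAt F x := by
      refine (hG x hx0 hxA).congr ?_
      refine Filter.eventuallyEq_of_mem (Ioo_mem_nhds hx0 hxκ) ?_
      intro y hy
      exact (hkey y hy).symm
    exact hCA.continuousWithinAt
  have h1mem : (1:ℝ) ∈ Set.Icc (F b) (F a) := ⟨hbF.le, by linarith⟩
  obtain ⟨c, hc, hFc⟩ := intermediate_value_Icc' hab.le hcontOn h1mem
  have hcIoo : c ∈ Set.Ioo (0:ℝ) κ :=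
    ⟨lt_of_lt_of_le ha.1 hc.1, lt_of_le_of_lt hc.2 hb.2⟩
  refine ⟨c, ⟨hcIoo, hFc⟩, ?_⟩
  rintro d ⟨hdIoo, hFd⟩
  exact hanti.injOn hdIoo hcIoo (by rw [hFd, hFc])
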